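/- Let H be a proper independent handle of a matroid M containing no coloops, and let Ψ denote the matroid basis polynomial. Then Ψ_M = (Σ_{h ∈ H} x^{H∖{h}}) · Ψ_{M∖H} + x^H · Ψ_{M/H}, where M∖H and M/H are the matroids obtained by deleting, respectively contracting, all elements of H. -/
import Mathlib


open Classical

/-- A matroid on a finite ground set `E`, presented by its nonempty collection of bases,
which satisfies the basis exchange axiom. -/
structure FinMatroid (α : Type*) [DecidableEq α] where
  E : Finset α
  bases : Finset (Finset α)
  bases_nonempty : bases.Nonempty
  subset_ground : ∀ B ∈ bases, B ⊆ E
  exchange : ∀ B ∈ bases, ∀ B' ∈ bases, ∀ e ∈ B \ B',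
      ∃ f ∈ B' \ B, insert f (B.erase e) ∈ bases

variable {α : Type*} [DecidableEq α]

/-- Independence with respect to a collection `𝓑` of bases: being contained in a basis. -/
def Indep (𝓑 : Finset (Finset α)) (I : Finset α) : Prop := ∃ B ∈ 𝓑, I ⊆ B

/-- The rank of a collection of bases: the (common) cardinality of the bases. -/
def dataRank (𝓑 : Finset (Finset α)) : ℕ := 𝓑.sup Finset.card

/-- The rank of a subset `A`: the maximal size of its intersection with a basis. -/
def dataRankOf (𝓑 : Finset (Finset α)) (A : Finset α) : ℕ := 𝓑.sup fun B => (B ∩ A).card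

/-- Circuits: the minimal dependent subsets of the ground set. -/
def IsCircuit (E : Finset α) (𝓑 : Finset (Finset α)) (C : Finset α) : Prop :=
  C ⊆ E ∧ ¬ Indep 𝓑 C ∧ ∀ D ⊂ C, Indep 𝓑 D

/-- A loop: an element lying in no basis. -/
def IsLoop (𝓑 : Finset (Finset α)) (e : α) : Prop := ∀ B ∈ 𝓑, e ∉ B

/-- A coloop: an element lying in every basis. -/
def IsColoop (𝓑 : Finset (Finset α)) (e : α) : Prop := ∀ B ∈ 𝓑, e ∈ B

/-- A handle: a nonempty subset of the ground set which every circuit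
either avoids entirely or contains entirely. -/
def IsHandle (E : Finset α) (𝓑 : Finset (Finset α)) (H : Finset α) : Prop :=
  H.Nonempty ∧ H ⊆ E ∧ ∀ C, IsCircuit E 𝓑 C → Disjoint H C ∨ H ⊆ C

/-- The rank of a matroid: the common cardinality of its bases. -/
def FinMatroid.rank (M : FinMatroid α) : ℕ := dataRank M.bases

/-- The bases of the deletion matroid `M \ H`: the maximal `M`-independent
subsets of `E ∖ H`. -/
noncomputable def deleteBases (M : FinMatroid α) (H : Finset α) : Finset (Finset α) :=
  ((M.E \ H).powerset.filter fun I => Indep M.bases I).filter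
    fun I => ∀ J ∈ (M.E \ H).powerset, Indep M.bases J → I ⊆ J → I = J

/-- The bases of the contraction matroid `M / H` (for `H` independent):
the sets `B \ H` where `B` is a basis of `M` containing `H`. -/
noncomputable def contractBases (M : FinMatroid α) (H : Finset α) : Finset (Finset α) :=
  (M.bases.filter fun B => H ⊆ B).image fun B => B \ H

/-- `𝓑N` is a quotient of `𝓑M` (on the common ground set `E`):
every circuit of `M` is a union of circuits of `N`. -/
def IsQuotientData (E : Finset α) (𝓑N 𝓑M : Finset (Finset α)) : Prop :=
  ∀ C, IsCircuit E 𝓑M C →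
    ∃ 𝒞 : Finset (Finset α), (∀ D ∈ 𝒞, IsCircuit E 𝓑N D) ∧ C = 𝒞.sup id

/-- The bases of the truncation `τ(M)`: the independent sets of `M`
of cardinality exactly `rank M - 1`. -/
noncomputable def truncBases (M : FinMatroid α) : Finset (Finset α) :=
  M.E.powerset.filter fun I => Indep M.bases I ∧ I.card = M.rank - 1

/-- The matroid basis polynomial `Ψ = ∑_{B basis} x^B`. -/
noncomputable def basisPoly (K : Type*) [CommRing K] (𝓑 : Finset (Finset α)) :
    MvPolynomial α K :=
  ∑ B ∈ 𝓑, ∏ e ∈ B, MvPolynomial.X e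

/-- The multivariate Tutte polynomial
`Z = ∑_{A ⊆ E} p^(rank - rank A) x^A`, an element of `K[p][x_e : e ∈ E]`. -/
noncomputable def tutte (K : Type*) [CommRing K] (E : Finset α) (𝓑 : Finset (Finset α)) :
    MvPolynomial α (Polynomial K) :=
  ∑ A ∈ E.powerset,
    MvPolynomial.C (Polynomial.X ^ (dataRank 𝓑 - dataRankOf 𝓑 A)) * ∏ a ∈ A, MvPolynomial.X a

/-- A polynomial with coefficient function `c` supported on the bases `𝓑`:
`∑_{B ∈ 𝓑} c_B x^B`. -/
noncomputable def msp (K : Type*) [CommRing K] (𝓑 : Finset (Finset α)) (c : Finset α → K) :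
    MvPolynomial α K :=
  ∑ B ∈ 𝓑, MvPolynomial.C (c B) * ∏ e ∈ B, MvPolynomial.X e

-- equicardinality of bases
lemma bases_card_aux (M : FinMatroid α) :
    ∀ n B, B ∈ M.bases → ∀ B' ∈ M.bases, (B \ B').card = n → B.card = B'.card := by
  intro n
  induction n using Nat.strong_induction_on with
  | _ n ih =>
    intro B hB B' hB' hcard
    rcases Finset.eq_empty_or_nonempty (B \ B') with h | ⟨e, he⟩
    · have hBB' : B ⊆ B' := Finset.sdiff_eq_empty_iff_subset.mp h
      rcases Finset.eq_empty_or_nonempty (B' \ B) with h2 | ⟨e, he⟩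
      · rw [Finset.Subset.antisymm hBB' (Finset.sdiff_eq_empty_iff_subset.mp h2)]
      · obtain ⟨f, hf, _⟩ := M.exchange B' hB' B hB e he
        rw [h] at hf
        exact absurd hf (Finset.notMem_empty f)
    · obtain ⟨f, hf, hB2⟩ := M.exchange B hB B' hB' e he
      have hfB : f ∉ B := (Finset.mem_sdiff.mp hf).2
      have hfB' : f ∈ B' := (Finset.mem_sdiff.mp hf).1
      have heB : e ∈ B := (Finset.mem_sdiff.mp he).1
      have hcardB : (insert f (B.erase e)).card = B.card := by
        rw [Finset.card_insert_of_notMem (fun hx => hfB (Finset.mem_of_mem_erase hx)),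
          Finset.card_erase_of_mem heB]
        have := Finset.card_pos.mpr ⟨e, heB⟩
        omega
      have hsub : (insert f (B.erase e)) \ B' ⊆ (B \ B').erase e := by
        intro x hx
        rcases Finset.mem_sdiff.mp hx with ⟨hx1, hx2⟩
        rcases Finset.mem_insert.mp hx1 with rfl | hx1
        · exact absurd hfB' hx2
        · exact Finset.mem_erase.mpr ⟨(Finset.mem_erase.mp hx1).1,
            Finset.mem_sdiff.mpr ⟨(Finset.mem_erase.mp hx1).2, hx2⟩⟩
      have hlt : ((insert f (B.erase e)) \ B').card < n := by
        calc ((insert f (B.erase e)) \ B').card ≤ ((B \ B').erase e).card :=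
              Finset.card_le_card hsub
          _ < (B \ B').card := Finset.card_erase_lt_of_mem he
          _ = n := hcard
      rw [← hcardB]
      exact ih _ hlt _ hB2 B' hB' rfl

lemma bases_card_eq (M : FinMatroid α) {B B' : Finset α} (hB : B ∈ M.bases)
    (hB' : B' ∈ M.bases) : B.card = B'.card :=
  bases_card_aux M _ B hB B' hB' rfl

lemma indep_subset {𝓑 : Finset (Finset α)} {I J : Finset α} (h : Indep 𝓑 I) (hJI : J ⊆ I) :
    Indep 𝓑 J := by
  obtain ⟨B, hB, hIB⟩ := h
  exact ⟨B, hB, hJI.trans hIB⟩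

lemma basis_maximal (M : FinMatroid α) {B I : Finset α} (hB : B ∈ M.bases)
    (hI : Indep M.bases I) (hBI : B ⊆ I) : I = B := by
  obtain ⟨B'', hB'', hIB''⟩ := hI
  have h1 : I.card ≤ B.card := (Finset.card_le_card hIB'').trans_eq (bases_card_eq M hB'' hB)
  exact (Finset.eq_of_subset_of_card_le hBI h1).symm

lemma exists_circuit (M : FinMatroid α) {D : Finset α} (hDE : D ⊆ M.E)
    (hD : ¬ Indep M.bases D) : ∃ C ⊆ D, IsCircuit M.E M.bases C := by
  classical
  obtain ⟨C, hC, hCmin⟩ := Finset.exists_min_image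
    (D.powerset.filter fun S => ¬ Indep M.bases S) Finset.card
    ⟨D, Finset.mem_filter.mpr ⟨Finset.mem_powerset.mpr Finset.Subset.rfl, hD⟩⟩
  rcases Finset.mem_filter.mp hC with ⟨hCD, hCdep⟩
  have hCD := Finset.mem_powerset.mp hCD
  refine ⟨C, hCD, hCD.trans hDE, hCdep, fun D' hD' => ?_⟩
  by_contra hD'dep
  have := hCmin D' (Finset.mem_filter.mpr ⟨Finset.mem_powerset.mpr (hD'.1.trans hCD), hD'dep⟩)
  exact absurd (Finset.card_lt_card hD') (by omega)

-- every basis misses at most one element of a handle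
lemma handle_missing (M : FinMatroid α) {H : Finset α}
    (hH : ∀ C, IsCircuit M.E M.bases C → Disjoint H C ∨ H ⊆ C) (hHE : H ⊆ M.E)
    {B : Finset α} (hB : B ∈ M.bases) {h₁ h₂ : α} (h1H : h₁ ∈ H) (h2H : h₂ ∈ H)
    (h1B : h₁ ∉ B) (h2B : h₂ ∉ B) : h₁ = h₂ := by
  by_contra hne
  have hdep : ¬ Indep M.bases (insert h₁ B) := by
    intro hi
    have := basis_maximal M hB hi (Finset.subset_insert _ _)
    exact h1B (this ▸ Finset.mem_insert_self h₁ B)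
  obtain ⟨C, hCsub, hCE, hCdep, hCmin⟩ := exists_circuit M
    (Finset.insert_subset (hHE h1H) (M.subset_ground B hB)) hdep
  have h1C : h₁ ∈ C := by
    by_contra h1C
    exact hCdep ⟨B, hB, fun x hx => (Finset.mem_insert.mp (hCsub hx)).resolve_left
      (fun h => h1C (h ▸ hx))⟩
  rcases hH C ⟨hCE, hCdep, hCmin⟩ with hd | hs
  · exact (Finset.disjoint_left.mp hd h1H) h1C
  · rcases Finset.mem_insert.mp (hCsub (hs h2H)) with h | h
    · exact hne h.symm
    · exact h2B h

lemma mem_deleteBases (M : FinMatroid α) (H B' : Finset α) :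
    B' ∈ deleteBases M H ↔ B' ⊆ M.E \ H ∧ Indep M.bases B' ∧
      ∀ J ⊆ M.E \ H, Indep M.bases J → B' ⊆ J → B' = J := by
  simp [deleteBases, Finset.mem_filter, Finset.mem_powerset, and_assoc]

-- a basis missing an element of the handle yields a delete-basis
lemma basis_to_delete (M : FinMatroid α) {H : Finset α}
    (hH : ∀ C, IsCircuit M.E M.bases C → Disjoint H C ∨ H ⊆ C) (hHE : H ⊆ M.E)
    {B : Finset α} (hB : B ∈ M.bases) {h : α} (hh : h ∈ H) (hhB : h ∉ B) :
    B \ H ∈ deleteBases M H ∧ B = H.erase h ∪ (B \ H) := by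
  have heraseSub : H.erase h ⊆ B := by
    intro x hx
    rcases Finset.mem_erase.mp hx with ⟨hxh, hxH⟩
    by_contra hxB
    exact hxh (handle_missing M hH hHE hB hxH hh hxB hhB)
  have hBeq : B = H.erase h ∪ (B \ H) := by
    ext x
    simp only [Finset.mem_union, Finset.mem_erase, Finset.mem_sdiff]
    constructor
    · intro hx
      by_cases hxH : x ∈ H
      · exact Or.inl ⟨fun he => hhB (he ▸ hx), hxH⟩
      · exact Or.inr ⟨hx, hxH⟩
    · rintro (hx | hx)
      · exact heraseSub (Finset.mem_erase.mpr hx)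
      · exact hx.1
  refine ⟨(mem_deleteBases M H (B \ H)).mpr ⟨?_, ?_, ?_⟩, hBeq⟩
  · exact Finset.sdiff_subset_sdiff (M.subset_ground B hB) Finset.Subset.rfl
  · exact ⟨B, hB, Finset.sdiff_subset⟩
  · intro J hJ hJind hsub
    apply Finset.Subset.antisymm hsub
    intro j hj
    by_contra hjB'
    have hjH : j ∉ H := (Finset.mem_sdiff.mp (hJ hj)).2
    have hjB : j ∉ B := fun hx => hjB' (Finset.mem_sdiff.mpr ⟨hx, hjH⟩)
    have hdep : ¬ Indep M.bases (insert j B) := by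
      intro hi
      have := basis_maximal M hB hi (Finset.subset_insert _ _)
      exact hjB (this ▸ Finset.mem_insert_self j B)
    obtain ⟨C, hCsub, hCE, hCdep, hCmin⟩ := exists_circuit M
      (Finset.insert_subset ((Finset.mem_sdiff.mp (hJ hj)).1) (M.subset_ground B hB)) hdep
    have hjC : j ∈ C := by
      by_contra hjC
      exact hCdep ⟨B, hB, fun x hx => (Finset.mem_insert.mp (hCsub hx)).resolve_left
        (fun he => hjC (he ▸ hx))⟩
    have hdisj : Disjoint H C := by
      rcases hH C ⟨hCE, hCdep, hCmin⟩ with hd | hs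
      · exact hd
      · exact absurd (hCsub (hs hh)) (by
          intro hx
          rcases Finset.mem_insert.mp hx with rfl | hx
          · exact hjH hh
          · exact hhB hx)
    have hCJ : C ⊆ J := by
      intro x hx
      rcases Finset.mem_insert.mp (hCsub hx) with rfl | hxB
      · exact hj
      · exact hsub (Finset.mem_sdiff.mpr ⟨hxB, fun hxH => Finset.disjoint_left.mp hdisj hxH hx⟩)
    exact hCdep (indep_subset hJind hCJ)

-- each delete-basis together with H minus any element forms a basis
lemma delete_to_basis (M : FinMatroid α) {H : Finset α}
    (hH : ∀ C, IsCircuit M.E M.bases C → Disjoint H C ∨ H ⊆ C) (hHE : H ⊆ M.E)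
    (hHne : H.Nonempty) (hco : ∀ h ∈ H, ¬ IsColoop M.bases h)
    {B' : Finset α} (hB' : B' ∈ deleteBases M H) {h : α} (hh : h ∈ H) :
    H.erase h ∪ B' ∈ M.bases := by
  obtain ⟨hB'E, hB'ind, hB'max⟩ := (mem_deleteBases M H B').mp hB'
  have hB'H : ∀ x ∈ B', x ∉ H := fun x hx => (Finset.mem_sdiff.mp (hB'E hx)).2
  obtain ⟨B, hB, hsub⟩ := hB'ind
  -- step: B \ B' ⊆ H
  have hBB'H : ∀ x ∈ B, x ∉ B' → x ∈ H := by
    intro x hxB hxB'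
    by_contra hxH
    have : B' = insert x B' := hB'max _ (Finset.insert_subset
        (Finset.mem_sdiff.mpr ⟨M.subset_ground B hB hxB, hxH⟩) hB'E)
      ⟨B, hB, Finset.insert_subset hxB hsub⟩ (Finset.subset_insert _ _)
    exact hxB' (this ▸ Finset.mem_insert_self x B')
  -- step: ¬ H ⊆ B
  have hnotHB : ¬ H ⊆ B := by
    intro hHB
    obtain ⟨h₀, hh₀⟩ := hHne
    have := hco h₀ hh₀
    simp only [IsColoop, not_forall] at this
    obtain ⟨B₀, hB₀, hh₀B₀⟩ := this
    obtain ⟨f, hf, hB₁⟩ := M.exchange B hB B₀ hB₀ h₀ (Finset.mem_sdiff.mpr ⟨hHB hh₀, hh₀B₀⟩)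
    rcases Finset.mem_sdiff.mp hf with ⟨hfB₀, hfB⟩
    have hfH : f ∉ H := fun hx => hfB (hHB hx)
    have hfB' : f ∉ B' := fun hx => hfB (hsub hx)
    have : B' = insert f B' := hB'max _ (Finset.insert_subset
        (Finset.mem_sdiff.mpr ⟨M.subset_ground B₀ hB₀ hfB₀, hfH⟩) hB'E)
      ⟨insert f (B.erase h₀), hB₁, Finset.insert_subset (Finset.mem_insert_self _ _)
        (fun x hx => Finset.mem_insert_of_mem (Finset.mem_erase.mpr
          ⟨fun he => hB'H x hx (he ▸ hh₀), hsub hx⟩))⟩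
      (Finset.subset_insert _ _)
    exact hfB' (this ▸ Finset.mem_insert_self f B')
  obtain ⟨h', hh'H, hh'B⟩ := by
    simpa only [Finset.subset_iff, not_forall] using hnotHB
  have hBH : B \ H = B' := by
    apply Finset.Subset.antisymm
    · intro x hx
      rcases Finset.mem_sdiff.mp hx with ⟨hxB, hxH⟩
      by_contra hxB'
      exact hxH (hBB'H x hxB hxB')
    · intro x hx
      exact Finset.mem_sdiff.mpr ⟨hsub hx, hB'H x hx⟩
  have hBeq : B = H.erase h' ∪ B' := by
    have := (basis_to_delete M hH hHE hB hh'H hh'B).2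
    rwa [hBH] at this
  by_cases hhh' : h = h'
  · rwa [hhh', ← hBeq]
  · have hhB : h ∈ B := by
      by_contra hhB
      exact hhh' (handle_missing M hH hHE hB hh hh'H hhB hh'B)
    have := hco h hh
    simp only [IsColoop, not_forall] at this
    obtain ⟨B₀, hB₀, hhB₀⟩ := this
    obtain ⟨f, hf, hB₂⟩ := M.exchange B hB B₀ hB₀ h (Finset.mem_sdiff.mpr ⟨hhB, hhB₀⟩)
    rcases Finset.mem_sdiff.mp hf with ⟨hfB₀, hfB⟩
    have hfh' : f = h' := by
      by_contra hfh'
      by_cases hfH : f ∈ H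
      · exact hfh' (handle_missing M hH hHE hB hfH hh'H hfB hh'B)
      · have hhB₂ : h ∉ insert f (B.erase h) := by
          simp only [Finset.mem_insert, Finset.mem_erase]
          push_neg
          exact ⟨fun he => hfB (he ▸ hhB), fun hc => absurd rfl hc⟩
        have hh'B₂ : h' ∉ insert f (B.erase h) := by
          simp only [Finset.mem_insert, Finset.mem_erase]
          push_neg
          exact ⟨fun he => hfh' he.symm, fun _ => hh'B⟩
        exact hhh' (handle_missing M hH hHE hB₂ hh hh'H hhB₂ hh'B₂)
    have : insert f (B.erase h) = H.erase h ∪ B' := by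
      rw [hfh']
      have hh'B' : h' ∉ B' := fun hx => hB'H h' hx hh'H
      have hhB' : h ∉ B' := fun hx => hB'H h hx hh
      rw [hBeq]
      ext x
      simp only [Finset.mem_insert, Finset.mem_erase, Finset.mem_union]
      constructor
      · rintro (rfl | ⟨hxh, (⟨hxh', hxH⟩ | hxB')⟩)
        · exact Or.inl ⟨fun he => hhh' he.symm, hh'H⟩
        · exact Or.inl ⟨hxh, hxH⟩
        · exact Or.inr hxB'
      · rintro (⟨hxh, hxH⟩ | hxB')
        · by_cases hxh' : x = h'
          · exact Or.inl hxh'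
          · exact Or.inr ⟨hxh, Or.inl ⟨hxh', hxH⟩⟩
        · exact Or.inr ⟨fun he => hhB' (he ▸ hxB'), Or.inr hxB'⟩
    rwa [this] at hB₂

theorem stmt16 {α : Type*} [DecidableEq α] {K : Type*} [CommRing K]
    (M : FinMatroid α) (H : Finset α)
    (hH : IsHandle M.E M.bases H) (hprop : H ≠ M.E)
    (hind : Indep M.bases H) (hco : ∀ h ∈ H, ¬ IsColoop M.bases h) :
    basisPoly K M.bases =
      (∑ h ∈ H, ∏ e ∈ H.erase h, MvPolynomial.X e) * basisPoly K (deleteBases M H) +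
        (∏ e ∈ H, MvPolynomial.X e) * basisPoly K (contractBases M H) := by
  classical
  obtain ⟨hHne, hHE, hHcirc⟩ := hH
  have key1 : ∑ B ∈ M.bases.filter (fun B => H ⊆ B), ∏ e ∈ B,
        (MvPolynomial.X e : MvPolynomial α K)
      = (∏ e ∈ H, MvPolynomial.X e) * basisPoly K (contractBases M H) := by
    rw [basisPoly, contractBases, Finset.sum_image (fun B hB B₂ hB₂ he => by
      have h1 := (Finset.mem_filter.mp hB).2
      have h2 := (Finset.mem_filter.mp hB₂).2
      rw [← Finset.sdiff_union_of_subset h1, ← Finset.sdiff_union_of_subset h2, he]),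
      Finset.mul_sum]
    refine Finset.sum_congr rfl fun B hB => ?_
    rw [mul_comm, Finset.prod_sdiff (Finset.mem_filter.mp hB).2]
  have key2 : ∑ B ∈ M.bases.filter (fun B => ¬ H ⊆ B), ∏ e ∈ B,
        (MvPolynomial.X e : MvPolynomial α K)
      = (∑ h ∈ H, ∏ e ∈ H.erase h, MvPolynomial.X e) * basisPoly K (deleteBases M H) := by
    rw [basisPoly, Finset.sum_mul_sum, ← Finset.sum_product']
    symm
    refine Finset.sum_bij (fun p _ => H.erase p.1 ∪ p.2) ?_ ?_ ?_ ?_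
    · rintro ⟨h, B'⟩ hp
      rcases Finset.mem_product.mp hp with ⟨hh, hB'⟩
      refine Finset.mem_filter.mpr ⟨delete_to_basis M hHcirc hHE hHne hco hB' hh, ?_⟩
      intro hsubs
      have hhB' : h ∉ B' := fun hx =>
        (Finset.mem_sdiff.mp (((mem_deleteBases M H B').mp hB').1 hx)).2 hh
      rcases Finset.mem_union.mp (hsubs hh) with h1 | h1
      · exact (Finset.mem_erase.mp h1).1 rfl
      · exact hhB' h1
    · rintro ⟨h₁, B₁⟩ hp₁ ⟨h₂, B₂⟩ hp₂ he
      rcases Finset.mem_product.mp hp₁ with ⟨hh₁, hB₁⟩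
      rcases Finset.mem_product.mp hp₂ with ⟨hh₂, hB₂⟩
      replace he : H.erase h₁ ∪ B₁ = H.erase h₂ ∪ B₂ := he
      have hd₁ : ∀ x ∈ B₁, x ∉ H := fun x hx =>
        (Finset.mem_sdiff.mp (((mem_deleteBases M H B₁).mp hB₁).1 hx)).2
      have hd₂ : ∀ x ∈ B₂, x ∉ H := fun x hx =>
        (Finset.mem_sdiff.mp (((mem_deleteBases M H B₂).mp hB₂).1 hx)).2
      have hheq : h₁ = h₂ := by
        by_contra hne
        have hmem : h₂ ∈ H.erase h₂ ∪ B₂ := by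
          rw [← he]
          exact Finset.mem_union_left _ (Finset.mem_erase.mpr ⟨fun hc => hne hc.symm, hh₂⟩)
        rcases Finset.mem_union.mp hmem with h1 | h1
        · exact (Finset.mem_erase.mp h1).1 rfl
        · exact hd₂ _ h1 hh₂
      subst hheq
      have hBeq : B₁ = B₂ := by
        ext x
        constructor
        · intro hx
          have hm : x ∈ H.erase h₁ ∪ B₂ := by
            rw [← he]; exact Finset.mem_union_right _ hx
          rcases Finset.mem_union.mp hm with h1 | h1
          · exact absurd (Finset.mem_erase.mp h1).2 (hd₁ x hx)
          · exact h1
        · intro hx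
          have hm : x ∈ H.erase h₁ ∪ B₁ := by
            rw [he]; exact Finset.mem_union_right _ hx
          rcases Finset.mem_union.mp hm with h1 | h1
          · exact absurd (Finset.mem_erase.mp h1).2 (hd₂ x hx)
          · exact h1
      rw [hBeq]
    · intro B hB
      rcases Finset.mem_filter.mp hB with ⟨hBb, hnsub⟩
      obtain ⟨h, hhH, hhB⟩ := by simpa only [Finset.subset_iff, not_forall] using hnsub
      obtain ⟨hdel, heq⟩ := basis_to_delete M hHcirc hHE hBb hhH hhB
      exact ⟨(h, B \ H), Finset.mem_product.mpr ⟨hhH, hdel⟩, heq.symm⟩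
    · rintro ⟨h, B'⟩ hp
      rcases Finset.mem_product.mp hp with ⟨hh, hB'⟩
      have hdisj : Disjoint (H.erase h) B' := Finset.disjoint_left.mpr fun x hx hxB' =>
        (Finset.mem_sdiff.mp (((mem_deleteBases M H B').mp hB').1 hxB')).2
          (Finset.mem_erase.mp hx).2
      exact (Finset.prod_union hdisj).symm
  rw [basisPoly, ← Finset.sum_filter_add_sum_filter_not M.bases (fun B => H ⊆ B),
    key1, key2, add_comm]
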